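/- arXiv:0901.2511 — 3 statements merged into one kernel-verified Lean document; each statement's English description precedes it below -/
import Mathlib

section
/- Let ρ: ω → (0,∞) be a C² function on a domain ω ⊂ Sⁿ and let r(x) = ρ(x)x be the position vector of the graph hypersurface R. If γ(x) = x - 2⟨x, N(x)⟩N(x) is the reflection map, where N is the unit normal of R, then for all coordinate directions i, j one has ⟨∂ᵢr, ∂ⱼγ⟩ = ⟨∂ⱼr, ∂ᵢγ⟩. -/
open scoped RealInnerProductSpace

/-- Partial derivative of a map from parameter space `Fin n → ℝ` in the `i`-th
coordinate direction. -/
noncomputable def pd {n : ℕ} {F : Type*} [NormedAddCommGroup F] [NormedSpace ℝ F]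
    (f : (Fin n → ℝ) → F) (u : Fin n → ℝ) (i : Fin n) : F :=
  fderiv ℝ f u (Pi.single i 1)

/-- If `f` is `C²` at `v`, then `w ↦ pd f w i` is differentiable at `v`. -/
lemma pd_differentiableAt {n : ℕ} {F : Type*} [NormedAddCommGroup F] [NormedSpace ℝ F]
    {f : (Fin n → ℝ) → F} {v : Fin n → ℝ} (hf : ContDiffAt ℝ 2 f v) (i : Fin n) :
    DifferentiableAt ℝ (fun w => pd f w i) v := by
  have h1 : ContDiffAt ℝ 1 (fderiv ℝ f) v :=
    hf.fderiv_right (by norm_num)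
  exact (h1.clm_apply contDiffAt_const).differentiableAt one_ne_zero

/-- The derivative of `pd f · i` is the second derivative applied to basis vectors. -/
lemma pd_pd {n : ℕ} {F : Type*} [NormedAddCommGroup F] [NormedSpace ℝ F]
    {f : (Fin n → ℝ) → F} {v : Fin n → ℝ} (hf : ContDiffAt ℝ 2 f v) (i j : Fin n) :
    fderiv ℝ (fun w => pd f w i) v (Pi.single j 1)
      = fderiv ℝ (fderiv ℝ f) v (Pi.single j 1) (Pi.single i 1) := by
  have h1 : ContDiffAt ℝ 1 (fderiv ℝ f) v := hf.fderiv_right (by norm_num)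
  have hd : DifferentiableAt ℝ (fderiv ℝ f) v := h1.differentiableAt one_ne_zero
  have h2 := (ContinuousLinearMap.apply ℝ F (Pi.single i 1)).hasFDerivAt.comp v hd.hasFDerivAt
  have : fderiv ℝ (fun w => pd f w i) v
      = (ContinuousLinearMap.apply ℝ F (Pi.single i 1)).comp (fderiv ℝ (fderiv ℝ f) v) := by
    simpa [pd, Function.comp_def] using h2.fderiv
  rw [this]; rfl

/-- For the reflector hypersurface `r = ρ • x` over a domain
`ω ⊂ Sⁿ` and the reflection map `γ = x - 2⟨x,N⟩N`, the bilinear form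
`⟨∂ᵢr, ∂ⱼγ⟩` is symmetric in `i, j`. -/
theorem symmetry_of_reflection_form
    {n : ℕ}
    (ω : Set (Fin n → ℝ)) (hω : IsOpen ω)
    (x : (Fin n → ℝ) → EuclideanSpace ℝ (Fin (n + 1)))
    (ρ : (Fin n → ℝ) → ℝ)
    (N γ r : (Fin n → ℝ) → EuclideanSpace ℝ (Fin (n + 1)))
    (hx : ContDiffOn ℝ 2 x ω)
    (hρ : ContDiffOn ℝ 2 ρ ω)
    (hρpos : ∀ u ∈ ω, 0 < ρ u)
    (hxunit : ∀ u ∈ ω, ‖x u‖ = 1)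
    (hr : ∀ u ∈ ω, r u = ρ u • x u)
    (hNunit : ∀ u ∈ ω, ‖N u‖ = 1)
    (hNperp : ∀ u ∈ ω, ∀ i, ⟪N u, pd r u i⟫ = 0)
    (hNsmooth : ContDiffOn ℝ 1 N ω)
    (hγ : ∀ u ∈ ω, γ u = x u - (2 * ⟪x u, N u⟫) • N u) :
    ∀ u ∈ ω, ∀ i j : Fin n,
      ⟪pd r u i, pd γ u j⟫ = ⟪pd r u j, pd γ u i⟫ := by
  classical
  have hxC : ∀ v ∈ ω, ContDiffAt ℝ 2 x v := fun v hv =>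
    hx.contDiffAt (hω.mem_nhds hv)
  have hρC : ∀ v ∈ ω, ContDiffAt ℝ 2 ρ v := fun v hv =>
    hρ.contDiffAt (hω.mem_nhds hv)
  have hNC : ∀ v ∈ ω, ContDiffAt ℝ 1 N v := fun v hv =>
    hNsmooth.contDiffAt (hω.mem_nhds hv)
  have hrC : ∀ v ∈ ω, ContDiffAt ℝ 2 r v := by
    intro v hv
    have h1 : ContDiffAt ℝ 2 (fun w => ρ w • x w) v := (hρC v hv).smul (hxC v hv)
    refine h1.congr_of_eventuallyEq ?_
    filter_upwards [hω.mem_nhds hv] with w hw using hr w hw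
  have hγC : ∀ v ∈ ω, ContDiffAt ℝ 1 γ v := by
    intro v hv
    have h1 : ContDiffAt ℝ 1 (fun w => x w - (2 * ⟪x w, N w⟫) • N w) v := by
      refine ((hxC v hv).of_le one_le_two).sub ?_
      exact ((contDiffAt_const (c := (2:ℝ))).mul
        (((hxC v hv).of_le one_le_two).inner ℝ (hNC v hv))).smul (hNC v hv)
    refine h1.congr_of_eventuallyEq ?_
    filter_upwards [hω.mem_nhds hv] with w hw using hγ w hw
  -- key identity: ⟪∂ᵢ r, γ⟫ = ∂ᵢ ρ on ω
  have key : ∀ v ∈ ω, ∀ i : Fin n, ⟪pd r v i, γ v⟫ = pd ρ v i := by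
    intro v hv i
    have hxd : DifferentiableAt ℝ x v := (hxC v hv).differentiableAt two_ne_zero
    have hρd : DifferentiableAt ℝ ρ v := (hρC v hv).differentiableAt two_ne_zero
    have hreq : r =ᶠ[nhds v] fun w => ρ w • x w := by
      filter_upwards [hω.mem_nhds hv] with w hw using hr w hw
    have hrd : HasFDerivAt (fun w => ρ w • x w)
        (ρ v • fderiv ℝ x v + (fderiv ℝ ρ v).smulRight (x v)) v :=
      hρd.hasFDerivAt.smul hxd.hasFDerivAt
    have hpd : pd r v i = pd ρ v i • x v + ρ v • pd x v i := by
      have h2 := hrd.fderiv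
      simp only [pd, hreq.fderiv_eq, h2, ContinuousLinearMap.add_apply,
        ContinuousLinearMap.smul_apply, ContinuousLinearMap.smulRight_apply]
      abel
    -- ⟪∂ᵢ x, x⟫ = 0
    have hxx : ⟪pd x v i, x v⟫ = 0 := by
      have hconst : (fun w => ⟪x w, x w⟫) =ᶠ[nhds v] fun _ => (1:ℝ) := by
        filter_upwards [hω.mem_nhds hv] with w hw
        have h := hxunit w hw
        rw [real_inner_self_eq_norm_sq, h]; norm_num
      have h0 : fderiv ℝ (fun w => ⟪x w, x w⟫) v = 0 := by
        rw [hconst.fderiv_eq]; exact fderiv_const_apply 1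
      have h1 := fderiv_inner_apply ℝ hxd hxd (Pi.single i 1)
      rw [h0] at h1
      simp only [ContinuousLinearMap.zero_apply] at h1
      have h2 : ⟪x v, fderiv ℝ x v (Pi.single i 1)⟫
          = ⟪fderiv ℝ x v (Pi.single i 1), x v⟫ := real_inner_comm _ _
      show ⟪fderiv ℝ x v (Pi.single i 1), x v⟫ = (0:ℝ)
      linarith [h1, h2]
    have hrx : ⟪pd r v i, x v⟫ = pd ρ v i := by
      rw [hpd]
      have hx1 : ⟪x v, x v⟫ = 1 := by
        rw [real_inner_self_eq_norm_sq, hxunit v hv]; norm_num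
      rw [inner_add_left, real_inner_smul_left, real_inner_smul_left, hx1, hxx]
      ring
    have hrN : ⟪pd r v i, N v⟫ = 0 := by
      rw [real_inner_comm]; exact hNperp v hv i
    rw [hγ v hv, inner_sub_right, real_inner_smul_right, hrx, hrN]
    ring
  -- main computation
  intro u hu i j
  have hmem : ω ∈ nhds u := hω.mem_nhds hu
  have main : ∀ i j : Fin n,
      ⟪pd r u i, pd γ u j⟫
        = fderiv ℝ (fderiv ℝ ρ) u (Pi.single j 1) (Pi.single i 1)
          - ⟪fderiv ℝ (fderiv ℝ r) u (Pi.single j 1) (Pi.single i 1), γ u⟫ := by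
    intro i j
    have hdri : DifferentiableAt ℝ (fun w => pd r w i) u :=
      pd_differentiableAt (hrC u hu) i
    have hγd : DifferentiableAt ℝ γ u := (hγC u hu).differentiableAt one_ne_zero
    have heq : (fun w => ⟪pd r w i, γ w⟫) =ᶠ[nhds u] fun w => pd ρ w i := by
      filter_upwards [hmem] with w hw using key w hw i
    have h1 : fderiv ℝ (fun w => ⟪pd r w i, γ w⟫) u
        = fderiv ℝ (fun w => pd ρ w i) u := heq.fderiv_eq
    have h2 := fderiv_inner_apply ℝ hdri hγd (Pi.single j 1)
    rw [h1, pd_pd (hρC u hu) i j, pd_pd (hrC u hu) i j] at h2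
    have h3 : ⟪pd r u i, pd γ u j⟫ = ⟪pd r u i, fderiv ℝ γ u (Pi.single j 1)⟫ := rfl
    rw [h3]
    linarith [h2]
  have hρsymm := (hρC u hu).isSymmSndFDerivAt (by simp)
  have hrsymm := (hrC u hu).isSymmSndFDerivAt (by simp)
  rw [main i j, main j i, hρsymm.eq, hrsymm.eq]
end

section
/- Let ê_{ij} = ⟨γᵢ, γⱼ⟩ where γ is the reflection map of the hypersurface R with intensity form κ_{ij}. Then ê_{ij} = κ_{ik} e^{kl} κ_{lj}; i.e., as matrices, ê = κ e^{-1} κ. -/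
open scoped RealInnerProductSpace

open Matrix

variable {n : ℕ}

local notation "E" => EuclideanSpace ℝ (Fin (n+1))

/-- Decomposition in orthogonal frame. -/
lemma frame_decomp (w : Fin n → E) (ν : E) (M : Matrix (Fin n) (Fin n) ℝ)
    (hM : ∀ i j, M i j = ⟪w i, w j⟫) (hdet : IsUnit M.det)
    (hν : ‖ν‖ = 1) (hperp : ∀ i, ⟪ν, w i⟫ = 0) (v : E) :
    v = (∑ k, (∑ l, M⁻¹ k l * ⟪w l, v⟫) • w k) + ⟪ν, v⟫ • ν := by
  have hν2 : ⟪ν, ν⟫ = 1 := by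
    rw [real_inner_self_eq_norm_sq, hν]; norm_num
  set F : Fin (n+1) → E := Fin.snoc w ν with hF
  have li : LinearIndependent ℝ F := by
    rw [Fintype.linearIndependent_iff]
    intro c hc
    have hsum : ∑ i : Fin (n+1), c i • F i
        = (∑ i : Fin n, c i.castSucc • w i) + c (Fin.last n) • ν := by
      rw [Fin.sum_univ_castSucc]
      simp [hF, Fin.snoc_castSucc, Fin.snoc_last]
    rw [hsum] at hc
    have hlast : c (Fin.last n) = 0 := by
      have := congrArg (fun z => ⟪ν, z⟫) hc
      simp only [inner_add_right, inner_sum, real_inner_smul_right,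
        inner_zero_right, hperp, mul_zero, Finset.sum_const_zero, zero_add,
        hν2, mul_one] at this
      exact this
    have hvec : Matrix.vecMul (fun i => c i.castSucc) M = 0 := by
      funext j
      have := congrArg (fun z => ⟪z, w j⟫) hc
      simp only [hlast, zero_smul, add_zero, sum_inner, real_inner_smul_left,
        inner_zero_left] at this
      simpa [Matrix.vecMul, dotProduct, hM] using this
    have hc0 : ∀ i : Fin n, c i.castSucc = 0 := by
      intro i
      have h2 := congrArg (fun z => Matrix.vecMul z M⁻¹) hvec
      simp only [Matrix.vecMul_vecMul, Matrix.mul_nonsing_inv M hdet,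
        Matrix.vecMul_one, Matrix.zero_vecMul] at h2
      exact congrFun h2 i
    intro i
    rcases Fin.eq_castSucc_or_eq_last i with ⟨j, rfl⟩ | rfl
    · exact hc0 j
    · exact hlast
  have hcard : Fintype.card (Fin (n+1)) = Module.finrank ℝ E := by
    simp [finrank_euclideanSpace_fin]
  let b := basisOfLinearIndependentOfCardEqFinrank li hcard
  have hb : ⇑b = F := coe_basisOfLinearIndependentOfCardEqFinrank li hcard
  set z : E := v - ((∑ k, (∑ l, M⁻¹ k l * ⟪w l, v⟫) • w k) + ⟪ν, v⟫ • ν) with hz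
  have hzw : ∀ i, ⟪w i, z⟫ = 0 := by
    intro i
    have hMinv : ∀ l, ∑ k, M i k * M⁻¹ k l = (1 : Matrix (Fin n) (Fin n) ℝ) i l := by
      intro l
      rw [← Matrix.mul_nonsing_inv M hdet]
      simp [Matrix.mul_apply]
    have key : ⟪w i, (∑ k, (∑ l, M⁻¹ k l * ⟪w l, v⟫) • w k) + ⟪ν, v⟫ • ν⟫ = ⟪w i, v⟫ := by
      rw [inner_add_right, inner_sum]
      have hp : ⟪w i, ν⟫ = 0 := by rw [real_inner_comm]; exact hperp i
      rw [real_inner_smul_right, hp, mul_zero, add_zero]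
      have h1 : ∀ k ∈ Finset.univ, ⟪w i, (∑ l, M⁻¹ k l * ⟪w l, v⟫) • w k⟫
          = ∑ l, M i k * M⁻¹ k l * ⟪w l, v⟫ := by
        intro k _
        rw [real_inner_smul_right, ← (hM i k), Finset.sum_mul]
        exact Finset.sum_congr rfl fun l _ => by ring
      rw [Finset.sum_congr rfl h1, Finset.sum_comm]
      have h2 : ∀ l ∈ Finset.univ, ∑ k, M i k * M⁻¹ k l * ⟪w l, v⟫
          = (1 : Matrix (Fin n) (Fin n) ℝ) i l * ⟪w l, v⟫ := by
        intro l _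
        rw [← Finset.sum_mul, hMinv l]
      rw [Finset.sum_congr rfl h2]
      simp [Matrix.one_apply]
    rw [hz, inner_sub_right, key, sub_self]
  have hzν : ⟪ν, z⟫ = 0 := by
    have key : ⟪ν, (∑ k, (∑ l, M⁻¹ k l * ⟪w l, v⟫) • w k) + ⟪ν, v⟫ • ν⟫ = ⟪ν, v⟫ := by
      rw [inner_add_right, inner_sum]
      have h1 : ∀ k ∈ Finset.univ, ⟪ν, (∑ l, M⁻¹ k l * ⟪w l, v⟫) • w k⟫ = (0:ℝ) :=
        fun k _ => by rw [real_inner_smul_right, hperp k, mul_zero]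
      rw [Finset.sum_eq_zero h1, zero_add, real_inner_smul_right, hν2, mul_one]
    rw [hz, inner_sub_right, key, sub_self]
  have hzF : ∀ a, ⟪F a, z⟫ = 0 := by
    intro a
    rcases Fin.eq_castSucc_or_eq_last a with ⟨j, rfl⟩ | rfl
    · simpa [hF, Fin.snoc_castSucc] using hzw j
    · simpa [hF, Fin.snoc_last] using hzν
  have hz0 : z = 0 := by
    have hrepr : z = ∑ a, b.repr z a • F a := by
      conv_lhs => rw [← b.sum_repr z]
      exact Finset.sum_congr rfl fun a _ => by rw [hb]
    have : ⟪z, z⟫ = 0 := by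
      nth_rewrite 1 [hrepr]
      rw [sum_inner]
      refine Finset.sum_eq_zero fun a _ => ?_
      rw [real_inner_smul_left, hzF a, mul_zero]
    exact inner_self_eq_zero.mp this
  have := sub_eq_zero.mp (hz ▸ hz0)
  exact this

lemma frame_inner (w : Fin n → E) (ν : E) (M : Matrix (Fin n) (Fin n) ℝ)
    (hM : ∀ i j, M i j = ⟪w i, w j⟫) (hdet : IsUnit M.det)
    (hν : ‖ν‖ = 1) (hperp : ∀ i, ⟪ν, w i⟫ = 0) (v v' : E) :
    ⟪v, v'⟫ = (∑ k, ∑ l, ⟪w k, v⟫ * M⁻¹ k l * ⟪w l, v'⟫) + ⟪ν, v⟫ * ⟪ν, v'⟫ := by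
  nth_rewrite 1 [frame_decomp w ν M hM hdet hν hperp v']
  rw [inner_add_right, inner_sum, real_inner_smul_right]
  congr 1
  · refine Finset.sum_congr rfl fun k _ => ?_
    rw [real_inner_smul_right, Finset.sum_mul]
    refine Finset.sum_congr rfl fun l _ => ?_
    rw [real_inner_comm v (w k)]; ring
  · rw [real_inner_comm v ν]; ring


set_option maxHeartbeats 1000000

/-- With `ê_{ij} = ⟨γᵢ, γⱼ⟩` and intensity form
`κ_{ij} = -⟨rᵢ, γⱼ⟩/ρ`, one has `ê_{ij} = κ_{ik} e^{kl} κ_{lj}`; i.e., as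
matrices, `ê = κ e⁻¹ κ`. -/
theorem hat_e_eq_kappa_einv_kappa
    {n : ℕ}
    (ω : Set (Fin n → ℝ)) (hω : IsOpen ω)
    (x : (Fin n → ℝ) → EuclideanSpace ℝ (Fin (n + 1)))
    (ρ : (Fin n → ℝ) → ℝ)
    (r N γ : (Fin n → ℝ) → EuclideanSpace ℝ (Fin (n + 1)))
    (e g κ : (Fin n → ℝ) → Matrix (Fin n) (Fin n) ℝ)
    (hx : ContDiffOn ℝ 2 x ω)
    (hρ : ContDiffOn ℝ 2 ρ ω)
    (hρpos : ∀ u ∈ ω, 0 < ρ u)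
    (hxunit : ∀ u ∈ ω, ‖x u‖ = 1)
    (hr : ∀ u ∈ ω, r u = ρ u • x u)
    (he : ∀ u ∈ ω, ∀ i j, e u i j = ⟪pd x u i, pd x u j⟫)
    (heinv : ∀ u ∈ ω, IsUnit (e u).det)
    (hg : ∀ u ∈ ω, ∀ i j, g u i j = ⟪pd r u i, pd r u j⟫)
    (hginv : ∀ u ∈ ω, IsUnit (g u).det)
    (hNunit : ∀ u ∈ ω, ‖N u‖ = 1)
    (hNperp : ∀ u ∈ ω, ∀ i, ⟪N u, pd r u i⟫ = 0)
    (hNsmooth : ContDiffOn ℝ 1 N ω)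
    (hγ : ∀ u ∈ ω, γ u = x u - (2 * ⟪x u, N u⟫) • N u)
    (hκ : ∀ u ∈ ω, ∀ i j, κ u i j = -(⟪pd r u i, pd γ u j⟫ / ρ u)) :
    ∀ u ∈ ω,
      (Matrix.of fun i j => ⟪pd γ u i, pd γ u j⟫) = κ u * (e u)⁻¹ * κ u := by
  intro u hu
  classical
  have hmem : ω ∈ nhds u := hω.mem_nhds hu
  have hρu : ρ u ≠ 0 := ne_of_gt (hρpos u hu)
  -- eventual equalities
  have hrev : r =ᶠ[nhds u] (fun v => ρ v • x v) :=
    Filter.eventuallyEq_of_mem hmem (fun v hv => hr v hv)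
  have hγev : γ =ᶠ[nhds u] (fun v => x v - (2 * ⟪x v, N v⟫) • N v) :=
    Filter.eventuallyEq_of_mem hmem (fun v hv => hγ v hv)
  -- smoothness
  have hxA : ContDiffAt ℝ 2 x u := hx.contDiffAt hmem
  have hρA : ContDiffAt ℝ 2 ρ u := hρ.contDiffAt hmem
  have hNA : ContDiffAt ℝ 1 N u := hNsmooth.contDiffAt hmem
  have hrA : ContDiffAt ℝ 2 r u := (hρA.smul hxA).congr_of_eventuallyEq hrev
  have hxD : DifferentiableAt ℝ x u := hxA.differentiableAt (by norm_num)
  have hρD : DifferentiableAt ℝ ρ u := hρA.differentiableAt (by norm_num)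
  have hND : DifferentiableAt ℝ N u := hNA.differentiableAt (by norm_num)
  -- abbreviations
  set X : Fin n → EuclideanSpace ℝ (Fin (n+1)) := fun i => pd x u i with hX
  set Nd : Fin n → EuclideanSpace ℝ (Fin (n+1)) := fun i => pd N u i with hNd
  set Rd : Fin n → EuclideanSpace ℝ (Fin (n+1)) := fun i => pd r u i with hRd
  set Gd : Fin n → EuclideanSpace ℝ (Fin (n+1)) := fun i => pd γ u i with hGd
  set p : Fin n → ℝ := fun i => pd ρ u i with hp
  set φ : ℝ := ⟪x u, N u⟫ with hφ
  -- P1 : derivative of r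
  have hRdval : ∀ i, Rd i = p i • x u + ρ u • X i := by
    intro i
    show pd r u i = _
    rw [pd, hrev.fderiv_eq, fderiv_fun_smul hρD hxD]
    rw [ContinuousLinearMap.add_apply, ContinuousLinearMap.smul_apply,
      ContinuousLinearMap.smulRight_apply]
    exact add_comm _ _
  -- derivative of the inner product ⟪x, N⟫
  have hinD : DifferentiableAt ℝ (fun v => (⟪x v, N v⟫ : ℝ)) u :=
    DifferentiableAt.inner ℝ hxD hND
  have hcD : DifferentiableAt ℝ (fun v => (2 * ⟪x v, N v⟫ : ℝ)) u := hinD.const_mul 2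
  have hcval : ∀ j, fderiv ℝ (fun v => (2 * ⟪x v, N v⟫ : ℝ)) u (Pi.single j 1)
      = 2 * (⟪x u, Nd j⟫ + ⟪X j, N u⟫) := by
    intro j
    rw [fderiv_const_mul hinD 2, ContinuousLinearMap.smul_apply,
      fderiv_inner_apply ℝ hxD hND (Pi.single j 1)]
    rfl
  -- P3 : derivative of γ
  have hGdval : ∀ j, Gd j = X j - ((2 * φ) • Nd j + (2 * (⟪x u, Nd j⟫ + ⟪X j, N u⟫)) • N u) := by
    intro j
    show pd γ u j = _
    rw [pd, hγev.fderiv_eq, fderiv_fun_sub (g := fun v => (2 * ⟪x v, N v⟫) • N v) hxD (hcD.smul hND), ContinuousLinearMap.sub_apply,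
      fderiv_fun_smul hcD hND, ContinuousLinearMap.add_apply, ContinuousLinearMap.smul_apply,
      ContinuousLinearMap.smulRight_apply, hcval j]
    rfl
  -- P4 : tangency on the sphere
  have hxx1 : ⟪x u, x u⟫ = 1 := by
    rw [real_inner_self_eq_norm_sq, hxunit u hu]; norm_num
  have hNN1 : ⟪N u, N u⟫ = 1 := by
    rw [real_inner_self_eq_norm_sq, hNunit u hu]; norm_num
  have hxX : ∀ i, ⟪x u, X i⟫ = 0 := by
    intro i
    have hone : (fun v => (⟪x v, x v⟫ : ℝ)) =ᶠ[nhds u] fun _ => (1:ℝ) :=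
      Filter.eventuallyEq_of_mem hmem (fun v hv => by
        rw [real_inner_self_eq_norm_sq, hxunit v hv]; norm_num)
    have h0 : fderiv ℝ (fun v => (⟪x v, x v⟫ : ℝ)) u = 0 := by
      rw [hone.fderiv_eq]; exact fderiv_const_apply (1:ℝ)
    have h1 := fderiv_inner_apply ℝ hxD hxD (Pi.single i 1)
    rw [h0] at h1
    simp only [ContinuousLinearMap.zero_apply] at h1
    have h2 : (0:ℝ) = ⟪x u, X i⟫ + ⟪X i, x u⟫ := h1
    have h3 := real_inner_comm (X i) (x u)
    linarith
  have hNNd : ∀ i, ⟪N u, Nd i⟫ = 0 := by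
    intro i
    have hone : (fun v => (⟪N v, N v⟫ : ℝ)) =ᶠ[nhds u] fun _ => (1:ℝ) :=
      Filter.eventuallyEq_of_mem hmem (fun v hv => by
        rw [real_inner_self_eq_norm_sq, hNunit v hv]; norm_num)
    have h0 : fderiv ℝ (fun v => (⟪N v, N v⟫ : ℝ)) u = 0 := by
      rw [hone.fderiv_eq]; exact fderiv_const_apply (1:ℝ)
    have h1 := fderiv_inner_apply ℝ hND hND (Pi.single i 1)
    rw [h0] at h1
    simp only [ContinuousLinearMap.zero_apply] at h1
    have h2 : (0:ℝ) = ⟪N u, Nd i⟫ + ⟪Nd i, N u⟫ := h1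
    have h3 := real_inner_comm (Nd i) (N u)
    linarith
  have hXx : ∀ i, ⟪X i, x u⟫ = 0 := fun i => by
    rw [real_inner_comm]; exact hxX i
  -- P7 : B and its symmetry
  have hNRd : ∀ i, ⟪N u, Rd i⟫ = 0 := fun i => hNperp u hu i
  set B : Fin n → Fin n → ℝ := fun a b => ⟪Nd a, Rd b⟫ with hB
  have hBsym : ∀ a b, B a b = B b a := by
    have hsym : IsSymmSndFDerivAt ℝ r u := hrA.isSymmSndFDerivAt (by norm_num)
    have hfdC : ContDiffAt ℝ 1 (fderiv ℝ r) u := hrA.fderiv_right (by norm_num)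
    have hfdD : DifferentiableAt ℝ (fderiv ℝ r) u := hfdC.differentiableAt (by norm_num)
    have hevalD : ∀ i : Fin n, DifferentiableAt ℝ (fun v => fderiv ℝ r v (Pi.single i 1)) u := by
      intro i
      exact (ContinuousLinearMap.apply ℝ (EuclideanSpace ℝ (Fin (n+1)))
        (Pi.single i 1 : Fin n → ℝ)).differentiableAt.comp u hfdD
    have hfd2 : ∀ i j : Fin n, fderiv ℝ (fun v => fderiv ℝ r v (Pi.single i 1)) u (Pi.single j 1)
        = fderiv ℝ (fderiv ℝ r) u (Pi.single j 1) (Pi.single i 1) := by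
      intro i j
      have := fderiv_clm_apply (c := fderiv ℝ r)
        (u := fun _ => (Pi.single i 1 : Fin n → ℝ)) hfdD (differentiableAt_const _)
      rw [this]
      simp
    have key : ∀ i j : Fin n,
        (0:ℝ) = ⟪N u, fderiv ℝ (fderiv ℝ r) u (Pi.single j 1) (Pi.single i 1)⟫ + ⟪Nd j, Rd i⟫ := by
      intro i j
      have hzero : (fun v => (⟪N v, fderiv ℝ r v (Pi.single i 1)⟫ : ℝ)) =ᶠ[nhds u] fun _ => (0:ℝ) :=
        Filter.eventuallyEq_of_mem hmem (fun v hv => hNperp v hv i)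
      have h0 : fderiv ℝ (fun v => (⟪N v, fderiv ℝ r v (Pi.single i 1)⟫ : ℝ)) u = 0 := by
        rw [hzero.fderiv_eq]; exact fderiv_const_apply (0:ℝ)
      have h1 := fderiv_inner_apply ℝ hND (hevalD i) (Pi.single j 1)
      rw [h0, hfd2 i j] at h1
      simp only [ContinuousLinearMap.zero_apply] at h1
      exact h1
    intro a b
    have h1 := key b a
    have h2 := key a b
    have h3 : fderiv ℝ (fderiv ℝ r) u (Pi.single a 1) (Pi.single b 1)
        = fderiv ℝ (fderiv ℝ r) u (Pi.single b 1) (Pi.single a 1) := hsym _ _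
    rw [h3] at h1
    have : B a b = ⟪Nd a, Rd b⟫ := rfl
    linarith [h1, h2]
  -- basic values
  have heval : ∀ i j, e u i j = ⟪X i, X j⟫ := fun i j => he u hu i j
  have hgval : ∀ i j, g u i j = ⟪Rd i, Rd j⟫ := fun i j => hg u hu i j
  have hesym : ∀ i j, e u i j = e u j i := fun i j => by
    rw [heval, heval, real_inner_comm]
  have hgform : ∀ i j, g u i j = p i * p j + ρ u^2 * e u i j := by
    intro i j
    rw [hgval, hRdval i, hRdval j, heval]
    simp only [inner_add_left, inner_add_right, real_inner_smul_left, real_inner_smul_right,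
      hxx1, hxX, hXx]
    ring
  have hsNval : ∀ i, ρ u * ⟪N u, X i⟫ = -(p i * φ) := by
    intro i
    have h := hNRd i
    rw [hRdval i, inner_add_right, real_inner_smul_right, real_inner_smul_right] at h
    have hcomm : ⟪N u, x u⟫ = φ := (real_inner_comm (N u) (x u)).symm.trans hφ.symm
    rw [hcomm] at h; linarith
  set Ge := (e u)⁻¹ with hGe
  set Gg := (g u)⁻¹ with hGg
  have heGe : e u * Ge = 1 := Matrix.mul_nonsing_inv _ (heinv u hu)
  have hGee : Ge * e u = 1 := Matrix.nonsing_inv_mul _ (heinv u hu)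
  have hgGg : g u * Gg = 1 := Matrix.mul_nonsing_inv _ (hginv u hu)
  have hGgg : Gg * g u = 1 := Matrix.nonsing_inv_mul _ (hginv u hu)
  have hGgsym : ∀ k l, Gg k l = Gg l k := by
    intro k l
    have hgsymM : (g u)ᵀ = g u := by
      ext a b; rw [Matrix.transpose_apply, hgval, hgval, real_inner_comm]
    calc Gg k l = ((g u)⁻¹)ᵀ l k := rfl
      _ = ((g u)ᵀ)⁻¹ l k := by rw [Matrix.transpose_nonsing_inv]
      _ = Gg l k := by rw [hgsymM]
  set q : Fin n → ℝ := fun k => ∑ l, Gg k l * p l with hq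
  set ep : Fin n → ℝ := fun k => ∑ l, Ge k l * p l with hep
  set W2 : ℝ := ρ u^2 + ∑ k, ∑ l, p k * Ge k l * p l with hW2
  have h_e_ep : ∀ i, ∑ j, e u i j * ep j = p i := by
    intro i
    calc ∑ j, e u i j * ep j = ∑ j, ∑ l, e u i j * Ge j l * p l := by
          refine Finset.sum_congr rfl fun j _ => ?_
          show e u i j * ∑ l, Ge j l * p l = _
          rw [Finset.mul_sum]
          exact Finset.sum_congr rfl fun l _ => by ring
      _ = ∑ l, (∑ j, e u i j * Ge j l) * p l := by
          rw [Finset.sum_comm]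
          exact Finset.sum_congr rfl fun l _ => by rw [Finset.sum_mul]
      _ = p i := by
          have h1 : ∀ l, ∑ j, e u i j * Ge j l = (1 : Matrix (Fin n) (Fin n) ℝ) i l := by
            intro l; rw [← heGe, Matrix.mul_apply]
          simp only [h1, Matrix.one_apply]
          simp
  have hpep : ∑ j, p j * ep j = W2 - ρ u^2 := by
    have h1 : ∑ j, p j * ep j = ∑ j, ∑ l, p j * Ge j l * p l := by
      refine Finset.sum_congr rfl fun j _ => ?_
      show p j * ∑ l, Ge j l * p l = _
      rw [Finset.mul_sum]
      exact Finset.sum_congr rfl fun l _ => by ring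
    rw [h1, hW2]; ring
  have h_g_ep : ∀ i, ∑ j, g u i j * ep j = W2 * p i := by
    intro i
    calc ∑ j, g u i j * ep j = ∑ j, (p i * (p j * ep j) + ρ u^2 * (e u i j * ep j)) := by
          refine Finset.sum_congr rfl fun j _ => by rw [hgform]; ring
      _ = p i * (∑ j, p j * ep j) + ρ u^2 * (∑ j, e u i j * ep j) := by
          rw [Finset.sum_add_distrib, ← Finset.mul_sum, ← Finset.mul_sum]
      _ = W2 * p i := by rw [hpep, h_e_ep]; ring
  have hqe : ∀ k, W2 * q k = ep k := by
    intro k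
    calc W2 * q k = ∑ i, Gg k i * (W2 * p i) := by
          show W2 * ∑ l, Gg k l * p l = _
          rw [Finset.mul_sum]
          exact Finset.sum_congr rfl fun i _ => by ring
      _ = ∑ i, Gg k i * (∑ j, g u i j * ep j) := by
          exact Finset.sum_congr rfl fun i _ => by rw [h_g_ep]
      _ = ∑ i, ∑ j, Gg k i * g u i j * ep j := by
          refine Finset.sum_congr rfl fun i _ => ?_
          rw [Finset.mul_sum]
          exact Finset.sum_congr rfl fun j _ => by ring
      _ = ∑ j, (∑ i, Gg k i * g u i j) * ep j := by
          rw [Finset.sum_comm]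
          exact Finset.sum_congr rfl fun j _ => by rw [Finset.sum_mul]
      _ = ep k := by
          have h1 : ∀ j, ∑ i, Gg k i * g u i j = (1 : Matrix (Fin n) (Fin n) ℝ) k j := by
            intro j; rw [← hGgg, Matrix.mul_apply]
          simp only [h1, Matrix.one_apply]
          simp
  have heq2 : ∀ k, W2 * (∑ l, e u k l * q l) = p k := by
    intro k
    calc W2 * ∑ l, e u k l * q l = ∑ l, e u k l * (W2 * q l) := by
          rw [Finset.mul_sum]
          exact Finset.sum_congr rfl fun l _ => by ring
      _ = ∑ l, e u k l * ep l := Finset.sum_congr rfl fun l _ => by rw [hqe]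
      _ = p k := h_e_ep k
  have hGeval : ∀ k l, Ge k l = ρ u^2 * Gg k l + W2 * (q k * q l) := by
    have hT : e u * (Matrix.of fun k l => ρ u^2 * Gg k l + W2 * (q k * q l)) = 1 := by
      ext i j
      rw [Matrix.mul_apply]
      have hsplit : ∀ k ∈ Finset.univ, e u i k * (Matrix.of fun k l => ρ u^2 * Gg k l + W2 * (q k * q l)) k j
          = (g u i k * Gg k j - (p i * (p k * Gg k j))) + (e u i k * (W2 * q k)) * q j := by
        intro k _
        show e u i k * (ρ u^2 * Gg k j + W2 * (q k * q j)) = _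
        have h1 : ρ u^2 * e u i k = g u i k - p i * p k := by rw [hgform]; ring
        have h2 : e u i k * (ρ u^2 * Gg k j) = (ρ u^2 * e u i k) * Gg k j := by ring
        rw [mul_add, h2, h1]
        ring
      rw [Finset.sum_congr rfl hsplit, Finset.sum_add_distrib, Finset.sum_sub_distrib]
      have hA : ∑ k, g u i k * Gg k j = (1 : Matrix (Fin n) (Fin n) ℝ) i j := by
        rw [← hgGg, Matrix.mul_apply]
      have hB : ∑ k, p i * (p k * Gg k j) = p i * q j := by
        rw [← Finset.mul_sum]
        congr 1
        show ∑ k, p k * Gg k j = q j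
        rw [hq]
        exact Finset.sum_congr rfl fun k _ => by rw [hGgsym k j]; ring
      have hC : ∑ k, (e u i k * (W2 * q k)) * q j = p i * q j := by
        rw [← Finset.sum_mul]
        congr 1
        calc ∑ k, e u i k * (W2 * q k) = W2 * ∑ k, e u i k * q k := by
              rw [Finset.mul_sum]; exact Finset.sum_congr rfl fun k _ => by ring
          _ = p i := heq2 i
      rw [hA, hB, hC]
      ring
    have hTeq : (Matrix.of fun k l => ρ u^2 * Gg k l + W2 * (q k * q l)) = Ge := by
      calc (Matrix.of fun k l => ρ u^2 * Gg k l + W2 * (q k * q l))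
          = 1 * (Matrix.of fun k l => ρ u^2 * Gg k l + W2 * (q k * q l)) := (one_mul _).symm
        _ = (Ge * e u) * (Matrix.of fun k l => ρ u^2 * Gg k l + W2 * (q k * q l)) := by rw [hGee]
        _ = Ge * (e u * (Matrix.of fun k l => ρ u^2 * Gg k l + W2 * (q k * q l))) := by
            rw [Matrix.mul_assoc]
        _ = Ge * 1 := by rw [hT]
        _ = Ge := mul_one _
    intro k l
    rw [← hTeq]
    rfl
  -- frame instances
  have hE := frame_inner X (x u) (e u) heval (heinv u hu) (hxunit u hu) hxX
  have hGfr := frame_inner Rd (N u) (g u) hgval (hginv u hu) (hNunit u hu) hNRd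
  -- φ² W2 = ρ²
  have hsN : ∀ k, ρ u * ⟪X k, N u⟫ = -(p k * φ) := fun k => by
    rw [real_inner_comm]; exact hsNval k
  have hφW : φ^2 * W2 = ρ u^2 := by
    have h1 := hE (N u) (N u)
    simp only [← hGe] at h1
    rw [hNN1, ← hφ] at h1
    have h3 : ρ u^2 * (∑ k, ∑ l, ⟪X k, N u⟫ * Ge k l * ⟪X l, N u⟫)
        = φ^2 * (∑ k, ∑ l, p k * Ge k l * p l) := by
      rw [Finset.mul_sum, Finset.mul_sum]
      refine Finset.sum_congr rfl fun k _ => ?_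
      rw [Finset.mul_sum, Finset.mul_sum]
      refine Finset.sum_congr rfl fun l _ => ?_
      calc ρ u^2 * (⟪X k, N u⟫ * Ge k l * ⟪X l, N u⟫)
          = (ρ u * ⟪X k, N u⟫) * (ρ u * ⟪X l, N u⟫) * Ge k l := by ring
        _ = (-(p k * φ)) * (-(p l * φ)) * Ge k l := by rw [hsN k, hsN l]
        _ = φ^2 * (p k * Ge k l * p l) := by ring
    have h4 := congrArg (fun z => ρ u^2 * z) h1
    rw [mul_add, h3] at h4
    rw [hW2]
    ring_nf
    ring_nf at h4
    linarith [h4]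
  -- the tangential part of Nd
  have htval : ∀ j, ⟪x u, Nd j⟫ = ∑ l, q l * B j l := by
    intro j
    have h1 := hGfr (r u) (Nd j)
    simp only [← hGg] at h1
    rw [hNNd j, mul_zero, add_zero] at h1
    have hRr : ∀ k, ⟪Rd k, r u⟫ = ρ u * p k := by
      intro k
      rw [hr u hu, hRdval k]
      simp only [inner_add_left, real_inner_smul_left, real_inner_smul_right, hxx1, hXx]
      ring
    have hRN : ∀ l, ⟪Rd l, Nd j⟫ = B j l := fun l => real_inner_comm (Nd j) (Rd l)
    have h2 : ⟪r u, Nd j⟫ = ρ u * ∑ l, q l * B j l := by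
      rw [h1]
      calc ∑ k, ∑ l, ⟪Rd k, r u⟫ * Gg k l * ⟪Rd l, Nd j⟫
          = ∑ k, ∑ l, (ρ u * p k) * Gg k l * B j l := by
            refine Finset.sum_congr rfl fun k _ => Finset.sum_congr rfl fun l _ => ?_
            rw [hRr k, hRN l]
        _ = ∑ l, ∑ k, (ρ u * p k) * Gg k l * B j l := Finset.sum_comm
        _ = ρ u * ∑ l, q l * B j l := by
            rw [Finset.mul_sum]
            refine Finset.sum_congr rfl fun l _ => ?_
            have hql : q l = ∑ k, p k * Gg k l := by
              rw [hq]
              exact Finset.sum_congr rfl fun k _ => by rw [hGgsym l k]; ring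
            calc ∑ k, (ρ u * p k) * Gg k l * B j l
                = (∑ k, p k * Gg k l) * (ρ u * B j l) := by
                  rw [Finset.sum_mul]
                  exact Finset.sum_congr rfl fun k _ => by ring
              _ = ρ u * (q l * B j l) := by rw [← hql]; ring
    have h3 : ⟪r u, Nd j⟫ = ρ u * ⟪x u, Nd j⟫ := by
      rw [hr u hu, real_inner_smul_left]
    exact mul_left_cancel₀ hρu (h3.symm.trans h2)
  -- κ values
  have hκq : ∀ i j, κ u i j = -(⟪Rd i, Gd j⟫ / ρ u) := fun i j => hκ u hu i j
  have hRdG : ∀ i j, ⟪Rd i, Gd j⟫ = ρ u * e u i j - 2*φ*(B j i) := by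
    intro i j
    rw [hGdval j, inner_sub_right, inner_add_right, real_inner_smul_right, real_inner_smul_right]
    have h1 : ⟪Rd i, N u⟫ = 0 := by rw [real_inner_comm]; exact hNRd i
    have h2 : ⟪Rd i, Nd j⟫ = B j i := real_inner_comm (Nd j) (Rd i)
    have h3 : ⟪Rd i, X j⟫ = ρ u * e u i j := by
      rw [hRdval i, inner_add_left, real_inner_smul_left, real_inner_smul_left, hxX j, heval]
      ring
    rw [h1, h2, h3]
    ring
  have hκval : ∀ i j, ρ u * κ u i j = -(ρ u * e u i j) + 2*φ*(B j i) := by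
    intro i j
    rw [hκq i j, hRdG i j]
    field_simp
    ring
  have hκsym : ∀ i j, κ u i j = κ u j i := by
    intro i j
    have h1 := hκval i j
    have h2 := hκval j i
    rw [hBsym j i, hesym i j] at h1
    exact mul_left_cancel₀ hρu (h1.trans h2.symm)
  have hRdGκ : ∀ k i, ⟪Rd k, Gd i⟫ = -(ρ u * κ u k i) := by
    intro k i
    rw [hκq k i]
    field_simp
  -- β value
  have hβval : ∀ j, ⟪N u, Gd j⟫ = -⟪N u, X j⟫ - 2*⟪x u, Nd j⟫ := by
    intro j
    rw [hGdval j, inner_sub_right, inner_add_right, real_inner_smul_right, real_inner_smul_right,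
      hNNd j, hNN1]
    have h1 : ⟪X j, N u⟫ = ⟪N u, X j⟫ := real_inner_comm (N u) (X j)
    rw [h1]
    ring
  -- key relation φ β = -ρ K
  have hKq : ∀ j, φ^2 * p j = ρ u^2 * (∑ k, e u j k * q k) := by
    intro j
    calc φ^2 * p j = φ^2 * (W2 * (∑ k, e u j k * q k)) := by rw [heq2 j]
      _ = (φ^2 * W2) * (∑ k, e u j k * q k) := by ring
      _ = ρ u^2 * (∑ k, e u j k * q k) := by rw [hφW]
  have hφβ : ∀ j, φ * ⟪N u, Gd j⟫ = -(ρ u) * (∑ k, κ u j k * q k) := by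
    intro j
    have hL : ρ u * (φ * ⟪N u, Gd j⟫) = φ^2 * p j - 2*(ρ u)*φ*⟪x u, Nd j⟫ := by
      rw [hβval j]
      have h1 := hsNval j
      calc ρ u * (φ * (-⟪N u, X j⟫ - 2*⟪x u, Nd j⟫))
          = -(φ * (ρ u * ⟪N u, X j⟫)) - 2*(ρ u)*φ*⟪x u, Nd j⟫ := by ring
        _ = -(φ * (-(p j * φ))) - 2*(ρ u)*φ*⟪x u, Nd j⟫ := by rw [h1]
        _ = φ^2 * p j - 2*(ρ u)*φ*⟪x u, Nd j⟫ := by ring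
    have hR : ρ u * (-(ρ u) * (∑ k, κ u j k * q k)) = φ^2 * p j - 2*(ρ u)*φ*⟪x u, Nd j⟫ := by
      have h2 : ∑ k, (ρ u * κ u j k) * q k
          = -(ρ u * (∑ k, e u j k * q k)) + 2*φ*(∑ k, q k * B j k) := by
        calc ∑ k, (ρ u * κ u j k) * q k
            = ∑ k, (-(ρ u * (e u j k * q k)) + 2*φ*(q k * B j k)) := by
              refine Finset.sum_congr rfl fun k _ => ?_
              rw [hκval j k, hBsym k j]
              ring
          _ = (∑ k, -(ρ u * (e u j k * q k))) + ∑ k, 2*φ*(q k * B j k) :=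
              Finset.sum_add_distrib
          _ = -(ρ u * (∑ k, e u j k * q k)) + 2*φ*(∑ k, q k * B j k) := by
              rw [Finset.sum_neg_distrib, Finset.mul_sum, Finset.mul_sum]
      have hpull : ∑ k, (ρ u * κ u j k) * q k = ρ u * ∑ k, κ u j k * q k := by
        rw [Finset.mul_sum]
        exact Finset.sum_congr rfl fun k _ => by ring
      have h3 : ρ u * (-(ρ u) * (∑ k, κ u j k * q k))
          = -(ρ u * (∑ k, (ρ u * κ u j k) * q k)) := by rw [hpull]; ring
      rw [h3, h2, htval j]
      have h4 := hKq j
      ring_nf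
      ring_nf at h4
      linarith [h4]
    exact mul_left_cancel₀ hρu (hL.trans hR.symm)
  -- β i β j = W2 K i K j
  have hββ : ∀ i j, ⟪N u, Gd i⟫ * ⟪N u, Gd j⟫
      = W2 * ((∑ k, κ u i k * q k) * (∑ l, κ u j l * q l)) := by
    intro i j
    have h1 := hφβ i
    have h2 := hφβ j
    have h3 : (φ * ⟪N u, Gd i⟫) * (φ * ⟪N u, Gd j⟫)
        = ρ u^2 * ((∑ k, κ u i k * q k) * (∑ l, κ u j l * q l)) := by
      rw [h1, h2]; ring
    have h4 : ρ u^2 * (⟪N u, Gd i⟫ * ⟪N u, Gd j⟫)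
        = ρ u^2 * (W2 * ((∑ k, κ u i k * q k) * (∑ l, κ u j l * q l))) := by
      calc ρ u^2 * (⟪N u, Gd i⟫ * ⟪N u, Gd j⟫)
          = (φ^2 * W2) * (⟪N u, Gd i⟫ * ⟪N u, Gd j⟫) := by rw [hφW]
        _ = W2 * ((φ * ⟪N u, Gd i⟫) * (φ * ⟪N u, Gd j⟫)) := by ring
        _ = W2 * (ρ u^2 * ((∑ k, κ u i k * q k) * (∑ l, κ u j l * q l))) := by rw [h3]
        _ = ρ u^2 * (W2 * ((∑ k, κ u i k * q k) * (∑ l, κ u j l * q l))) := by ring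
    exact mul_left_cancel₀ (pow_ne_zero 2 hρu) h4
  -- endgame
  show (Matrix.of fun i j => ⟪Gd i, Gd j⟫) = κ u * Ge * κ u
  ext i j
  show (⟪Gd i, Gd j⟫ : ℝ) = (κ u * Ge * κ u) i j
  have hL : ⟪Gd i, Gd j⟫ = ρ u^2 * (∑ k, ∑ l, κ u i k * Gg k l * κ u j l)
      + W2 * ((∑ k, κ u i k * q k) * (∑ l, κ u j l * q l)) := by
    have h1 := hGfr (Gd i) (Gd j)
    simp only [← hGg] at h1
    rw [h1, hββ i j]
    congr 1
    calc ∑ k, ∑ l, ⟪Rd k, Gd i⟫ * Gg k l * ⟪Rd l, Gd j⟫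
        = ∑ k, ∑ l, ρ u^2 * (κ u i k * Gg k l * κ u j l) := by
          refine Finset.sum_congr rfl fun k _ => Finset.sum_congr rfl fun l _ => ?_
          rw [hRdGκ k i, hRdGκ l j, hκsym k i, hκsym l j]
          ring
      _ = ρ u^2 * ∑ k, ∑ l, κ u i k * Gg k l * κ u j l := by
          rw [Finset.mul_sum]
          exact Finset.sum_congr rfl fun k _ => by rw [Finset.mul_sum]
  have hR : (κ u * Ge * κ u) i j
      = ρ u^2 * (∑ k, ∑ l, κ u i k * Gg k l * κ u j l)
      + W2 * ((∑ k, κ u i k * q k) * (∑ l, κ u j l * q l)) := by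
    calc (κ u * Ge * κ u) i j = ∑ l, (∑ k, κ u i k * Ge k l) * κ u l j := by
          rw [Matrix.mul_apply]
          exact Finset.sum_congr rfl fun l _ => by rw [Matrix.mul_apply]
      _ = ∑ l, ∑ k, κ u i k * Ge k l * κ u l j := by
          refine Finset.sum_congr rfl fun l _ => by rw [Finset.sum_mul]
      _ = ∑ k, ∑ l, κ u i k * Ge k l * κ u l j := Finset.sum_comm
      _ = ∑ k, ∑ l, (ρ u^2 * (κ u i k * Gg k l * κ u j l)
            + W2 * ((κ u i k * q k) * (κ u j l * q l))) := by
          refine Finset.sum_congr rfl fun k _ => Finset.sum_congr rfl fun l _ => ?_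
          rw [hGeval k l, hκsym l j]
          ring
      _ = (∑ k, ∑ l, ρ u^2 * (κ u i k * Gg k l * κ u j l))
            + ∑ k, ∑ l, W2 * ((κ u i k * q k) * (κ u j l * q l)) := by
          rw [Finset.sum_congr rfl fun k _ => Finset.sum_add_distrib, Finset.sum_add_distrib]
      _ = ρ u^2 * (∑ k, ∑ l, κ u i k * Gg k l * κ u j l)
            + W2 * ((∑ k, κ u i k * q k) * (∑ l, κ u j l * q l)) := by
          congr 1
          · rw [Finset.mul_sum]
            exact Finset.sum_congr rfl fun k _ => by rw [Finset.mul_sum]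
          · rw [Finset.sum_mul_sum, Finset.mul_sum]
            refine Finset.sum_congr rfl fun k _ => ?_
            exact (Finset.mul_sum _ _ _).symm
  rw [hL, hR]
end

section
/- For the hypersurface given by radial function ρ over ω ⊂ Sⁿ with reflection map γ, the normal component of γᵢ satisfies ⟨γᵢ, N⟩ = -(ρ^j/W_ρ) κ_{ji}, where ρ^j = e^{jk}ρ_k, W_ρ = √(ρ² + |∇ρ|²), and κ is the intensity form. -/
open scoped RealInnerProductSpace

theorem pd_inner {n : ℕ} {F : Type*} [NormedAddCommGroup F] [InnerProductSpace ℝ F]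
    {f g : (Fin n → ℝ) → F}
    {u : Fin n → ℝ} (hf : DifferentiableAt ℝ f u) (hg : DifferentiableAt ℝ g u) (i : Fin n) :
    pd (fun w => ⟪f w, g w⟫) u i = ⟪pd f u i, g u⟫ + ⟪f u, pd g u i⟫ := by
  rw [pd, fderiv_inner_apply (𝕜 := ℝ) hf hg, pd, pd, real_inner_comm]
  ring

theorem pd_const_on {n : ℕ} {f : (Fin n → ℝ) → ℝ} {ω : Set (Fin n → ℝ)} (hω : IsOpen ω)
    {u : Fin n → ℝ} (hu : u ∈ ω) {c : ℝ} (h : ∀ v ∈ ω, f v = c) (i : Fin n) :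
    pd f u i = 0 := by
  have : f =ᶠ[nhds u] fun _ => c := Filter.eventuallyEq_of_mem (hω.mem_nhds hu) h
  rw [pd, this.fderiv_eq, fderiv_fun_const]
  simp

/-- The normal component of `γᵢ` satisfies
`⟨γᵢ, N⟩ = -(ρ^j/W_ρ) κ_{ji}`, where `ρ^j = e^{jk}ρ_k`, `W_ρ = √(ρ² + |∇ρ|²)`,
and `κ_{ij} = -(e_{ij} + (2/W_ρ) b_{ij})` is the intensity form with
`b_{ij} = -⟨rⱼ, Nᵢ⟩` the second fundamental form. -/
theorem normal_component_of_reflected_derivative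
    {n : ℕ}
    (ω : Set (Fin n → ℝ)) (hω : IsOpen ω)
    (x : (Fin n → ℝ) → EuclideanSpace ℝ (Fin (n + 1)))
    (ρ : (Fin n → ℝ) → ℝ)
    (r N γ gradρ : (Fin n → ℝ) → EuclideanSpace ℝ (Fin (n + 1)))
    (W : (Fin n → ℝ) → ℝ)
    (e g b κ : (Fin n → ℝ) → Matrix (Fin n) (Fin n) ℝ)
    (hx : ContDiffOn ℝ 2 x ω)
    (hρ : ContDiffOn ℝ 2 ρ ω)
    (hρpos : ∀ u ∈ ω, 0 < ρ u)
    (hxunit : ∀ u ∈ ω, ‖x u‖ = 1)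
    (hr : ∀ u ∈ ω, r u = ρ u • x u)
    (he : ∀ u ∈ ω, ∀ i j, e u i j = ⟪pd x u i, pd x u j⟫)
    (heinv : ∀ u ∈ ω, IsUnit (e u).det)
    (hg : ∀ u ∈ ω, ∀ i j, g u i j = ⟪pd r u i, pd r u j⟫)
    (hginv : ∀ u ∈ ω, IsUnit (g u).det)
    (hgrad : ∀ u ∈ ω, gradρ u = ∑ i, ∑ j, ((e u)⁻¹ i j * pd ρ u j) • pd x u i)
    (hW : ∀ u ∈ ω,
      W u = Real.sqrt ((ρ u) ^ 2 + ∑ i, ∑ j, (e u)⁻¹ i j * pd ρ u i * pd ρ u j))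
    (hN : ∀ u ∈ ω, N u = (W u)⁻¹ • (ρ u • x u - gradρ u))
    (hNsmooth : ContDiffOn ℝ 1 N ω)
    (hγ : ∀ u ∈ ω, γ u = x u - (2 * ⟪x u, N u⟫) • N u)
    (hb : ∀ u ∈ ω, ∀ i j, b u i j = -⟪pd r u j, pd N u i⟫)
    (hκ : ∀ u ∈ ω, ∀ i j, κ u i j = -(e u i j + (2 / W u) * b u i j)) :
    ∀ u ∈ ω, ∀ i : Fin n,
      ⟪pd γ u i, N u⟫ =
        -∑ j, ((∑ k, (e u)⁻¹ j k * pd ρ u k) / W u) * κ u j i := by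
    -- differentiability facts
  have hxC : ∀ v ∈ ω, ContDiffAt ℝ 2 x v := fun v hv => hx.contDiffAt (hω.mem_nhds hv)
  have hρC : ∀ v ∈ ω, ContDiffAt ℝ 2 ρ v := fun v hv => hρ.contDiffAt (hω.mem_nhds hv)
  have hxd : ∀ v ∈ ω, DifferentiableAt ℝ x v :=
    fun v hv => (hxC v hv).differentiableAt (by norm_num)
  have hρd : ∀ v ∈ ω, DifferentiableAt ℝ ρ v :=
    fun v hv => (hρC v hv).differentiableAt (by norm_num)
  have hNd : ∀ v ∈ ω, DifferentiableAt ℝ N v :=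
    fun v hv => (hNsmooth.contDiffAt (hω.mem_nhds hv)).differentiableAt (by norm_num)
  -- ⟪x,x⟫ = 1 on ω
  have hxx : ∀ v ∈ ω, ⟪x v, x v⟫ = 1 := by
    intro v hv
    rw [real_inner_self_eq_norm_sq, hxunit v hv]; norm_num
  -- tangency: ⟪pd x v i, x v⟫ = 0
  have hA : ∀ v ∈ ω, ∀ i, ⟪pd x v i, x v⟫ = 0 := by
    intro v hv i
    have h0 : pd (fun w => ⟪x w, x w⟫) v i = 0 := pd_const_on hω hv hxx i
    rw [pd_inner (hxd v hv) (hxd v hv)] at h0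
    rw [real_inner_comm (pd x v i) (x v)] at h0
    linarith
  have hA' : ∀ v ∈ ω, ∀ i, ⟪x v, pd x v i⟫ = 0 := by
    intro v hv i; rw [real_inner_comm]; exact hA v hv i
  -- e is symmetric and e * e⁻¹ = 1
  have hesym : ∀ v ∈ ω, ∀ i j, e v i j = e v j i := by
    intro v hv i j; rw [he v hv, he v hv, real_inner_comm]
  have hee : ∀ v ∈ ω, ∀ i k, (∑ j, e v i j * (e v)⁻¹ j k) = if i = k then 1 else 0 := by
    intro v hv i k
    have h2 := congrArg (fun M : Matrix (Fin n) (Fin n) ℝ => M i k)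
      (Matrix.mul_nonsing_inv (e v) (heinv v hv))
    simpa [Matrix.mul_apply, Matrix.one_apply] using h2
  have heinvsym : ∀ v ∈ ω, ∀ i j, (e v)⁻¹ i j = (e v)⁻¹ j i := by
    intro v hv i j
    have ht : (e v).transpose = e v := by
      ext a c
      simp only [Matrix.transpose_apply]
      exact (hesym v hv c a)
    have h3 := Matrix.transpose_nonsing_inv (e v)
    rw [ht] at h3
    have h2 := congrArg (fun M : Matrix (Fin n) (Fin n) ℝ => M i j) h3
    simpa [Matrix.transpose_apply] using h2.symm
  -- ⟪pd x v i, gradρ v⟫ = pd ρ v i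
  have hC : ∀ v ∈ ω, ∀ i, ⟪pd x v i, gradρ v⟫ = pd ρ v i := by
    intro v hv i
    rw [hgrad v hv]
    have : ⟪pd x v i, ∑ a, ∑ j, ((e v)⁻¹ a j * pd ρ v j) • pd x v a⟫
        = ∑ a, ∑ j, ((e v)⁻¹ a j * pd ρ v j) * e v i a := by
      rw [inner_sum]
      refine Finset.sum_congr rfl fun a _ => ?_
      rw [inner_sum]
      refine Finset.sum_congr rfl fun j _ => ?_
      rw [real_inner_smul_right, he v hv i a]
    rw [this]
    have h2 : ∀ a : Fin n, ∑ j, ((e v)⁻¹ a j * pd ρ v j) * e v i a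
        = ∑ j, pd ρ v j * (e v i a * (e v)⁻¹ a j) := by
      intro a; refine Finset.sum_congr rfl fun j _ => ?_; ring
    calc (∑ a, ∑ j, ((e v)⁻¹ a j * pd ρ v j) * e v i a)
        = ∑ j, pd ρ v j * (∑ a, e v i a * (e v)⁻¹ a j) := by
          rw [Finset.sum_comm]
          refine Finset.sum_congr rfl fun j _ => ?_
          rw [Finset.mul_sum]
          refine Finset.sum_congr rfl fun a _ => ?_
          ring
      _ = pd ρ v i := by
          simp only [hee v hv]
          simp
  -- ⟪x v, gradρ v⟫ = 0
  have hD : ∀ v ∈ ω, ⟪x v, gradρ v⟫ = 0 := by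
    intro v hv
    rw [hgrad v hv, inner_sum]
    refine Finset.sum_eq_zero fun a _ => ?_
    rw [inner_sum]
    refine Finset.sum_eq_zero fun j _ => ?_
    rw [real_inner_smul_right, hA' v hv a, mul_zero]
  -- the quantity Q
  have hgr : ∀ v ∈ ω, ∀ y : EuclideanSpace ℝ (Fin (n + 1)),
      ⟪y, gradρ v⟫ = ∑ a, ∑ j, ((e v)⁻¹ a j * pd ρ v j) * ⟪y, pd x v a⟫ := by
    intro v hv y
    rw [hgrad v hv, inner_sum]
    refine Finset.sum_congr rfl fun a _ => ?_
    rw [inner_sum]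
    refine Finset.sum_congr rfl fun j _ => ?_
    rw [real_inner_smul_right]
  have hQ : ∀ v ∈ ω, ⟪gradρ v, gradρ v⟫
      = ∑ i, ∑ j, (e v)⁻¹ i j * pd ρ v i * pd ρ v j := by
    intro v hv
    rw [hgr v hv (gradρ v)]
    refine Finset.sum_congr rfl fun a _ => Finset.sum_congr rfl fun j _ => ?_
    rw [real_inner_comm (pd x v a) (gradρ v), hC v hv a]
    ring
  -- positivity of W and its square
  have hQnonneg : ∀ v ∈ ω, 0 ≤ ∑ i, ∑ j, (e v)⁻¹ i j * pd ρ v i * pd ρ v j := by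
    intro v hv
    rw [← hQ v hv]
    exact real_inner_self_nonneg
  have hargpos : ∀ v ∈ ω,
      0 < (ρ v) ^ 2 + ∑ i, ∑ j, (e v)⁻¹ i j * pd ρ v i * pd ρ v j := by
    intro v hv
    have := hρpos v hv
    nlinarith [hQnonneg v hv]
  have hWpos : ∀ v ∈ ω, 0 < W v := by
    intro v hv
    rw [hW v hv]
    exact Real.sqrt_pos.2 (hargpos v hv)
  have hWne : ∀ v ∈ ω, W v ≠ 0 := fun v hv => (hWpos v hv).ne'
  have hWsq : ∀ v ∈ ω, W v ^ 2
      = (ρ v) ^ 2 + ∑ i, ∑ j, (e v)⁻¹ i j * pd ρ v i * pd ρ v j := by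
    intro v hv
    rw [hW v hv, Real.sq_sqrt (hargpos v hv).le]
  -- ⟪x, N⟫ = ρ / W
  have hxN : ∀ v ∈ ω, ⟪x v, N v⟫ = ρ v / W v := by
    intro v hv
    rw [hN v hv, real_inner_smul_right, inner_sub_right, real_inner_smul_right,
      hxx v hv, hD v hv]
    field_simp
    ring
  -- ⟪pd x v i, N v⟫ = -(pd ρ v i) / W v
  have hxiN : ∀ v ∈ ω, ∀ i, ⟪pd x v i, N v⟫ = -(pd ρ v i) / W v := by
    intro v hv i
    rw [hN v hv, real_inner_smul_right, inner_sub_right, real_inner_smul_right,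
      hA v hv i, hC v hv i]
    field_simp
    ring
  -- ⟪N, N⟫ = 1
  have hNN : ∀ v ∈ ω, ⟪N v, N v⟫ = 1 := by
    intro v hv
    have hgx : ⟪gradρ v, x v⟫ = 0 := by rw [real_inner_comm]; exact hD v hv
    rw [hN v hv, real_inner_smul_left, real_inner_smul_right, inner_sub_left,
      inner_sub_right, inner_sub_right, real_inner_smul_left, real_inner_smul_left,
      real_inner_smul_right, real_inner_smul_right, hxx v hv, hD v hv, hgx]
    have h2 := hWsq v hv
    rw [← hQ v hv] at h2
    have key : ∀ t : ℝ, t = W v * W v → (W v)⁻¹ * ((W v)⁻¹ * t) = 1 := by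
      intro t ht
      rw [ht]
      field_simp [hWne v hv]
    apply key
    linear_combination -h2
  -- ⟪N, pd N⟫ = 0
  have hNiN : ∀ v ∈ ω, ∀ i, ⟪N v, pd N v i⟫ = 0 := by
    intro v hv i
    have h0 : pd (fun w => ⟪N w, N w⟫) v i = 0 := pd_const_on hω hv hNN i
    rw [pd_inner (hNd v hv) (hNd v hv)] at h0
    rw [real_inner_comm (pd N v i) (N v)] at h0
    rw [real_inner_comm]
    linarith
  -- r is C² near points of ω, and formula for pd r
  have hrE : ∀ v ∈ ω, r =ᶠ[nhds v] fun w => ρ w • x w :=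
    fun v hv => Filter.eventuallyEq_of_mem (hω.mem_nhds hv) hr
  have hrC : ∀ v ∈ ω, ContDiffAt ℝ 2 r v := by
    intro v hv
    exact ((hρC v hv).smul (hxC v hv)).congr_of_eventuallyEq (hrE v hv)
  have hpdr : ∀ v ∈ ω, ∀ j, pd r v j = pd ρ v j • x v + ρ v • pd x v j := by
    intro v hv j
    have hder : HasFDerivAt (fun w => ρ w • x w)
        (ρ v • fderiv ℝ x v + (fderiv ℝ ρ v).smulRight (x v)) v :=
      (hρd v hv).hasFDerivAt.smul (hxd v hv).hasFDerivAt
    have : fderiv ℝ r v = ρ v • fderiv ℝ x v + (fderiv ℝ ρ v).smulRight (x v) := by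
      rw [(hrE v hv).fderiv_eq]
      exact hder.fderiv
    rw [pd, this]
    simp [pd, ContinuousLinearMap.add_apply, ContinuousLinearMap.smul_apply,
      ContinuousLinearMap.smulRight_apply]
    abel
  -- ⟪pd r v j, N v⟫ = 0
  have hrjN : ∀ v ∈ ω, ∀ j, ⟪pd r v j, N v⟫ = 0 := by
    intro v hv j
    rw [hpdr v hv j, inner_add_left, real_inner_smul_left, real_inner_smul_left,
      hxN v hv, hxiN v hv j]
    field_simp [hWne v hv]
    ring
    -- symmetry of the second fundamental form
  have hbsymm : ∀ v ∈ ω, ∀ i j, b v i j = b v j i := by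
    intro v hv i j
    have hsym : IsSymmSndFDerivAt ℝ r v := (hrC v hv).isSymmSndFDerivAt (by norm_num)
    have hf1 : ContDiffAt ℝ 1 (fderiv ℝ r) v := (hrC v hv).fderiv_right (by norm_num)
    have hfd : DifferentiableAt ℝ (fderiv ℝ r) v := hf1.differentiableAt (by norm_num)
    have key : ∀ a c : Fin n,
        ⟪fderiv ℝ (fderiv ℝ r) v (Pi.single a 1) (Pi.single c 1), N v⟫
          + ⟪pd r v c, pd N v a⟫ = 0 := by
      intro a c
      have h0 : pd (fun w => ⟪pd r w c, N w⟫) v a = 0 :=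
        pd_const_on hω hv (fun w hw => hrjN w hw c) a
      have hcomp : HasFDerivAt (fun w => (fderiv ℝ r w) (Pi.single c 1))
          ((ContinuousLinearMap.apply ℝ (EuclideanSpace ℝ (Fin (n + 1)))
            ((Pi.single c 1 : Fin n → ℝ))).comp (fderiv ℝ (fderiv ℝ r) v)) v :=
        (ContinuousLinearMap.apply ℝ (EuclideanSpace ℝ (Fin (n + 1)))
          ((Pi.single c 1 : Fin n → ℝ))).hasFDerivAt.comp v hfd.hasFDerivAt
      have hdapp : DifferentiableAt ℝ (fun w => pd r w c) v := hcomp.differentiableAt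
      rw [pd_inner hdapp (hNd v hv) a] at h0
      have h1 : pd (fun w => pd r w c) v a
          = fderiv ℝ (fderiv ℝ r) v (Pi.single a 1) (Pi.single c 1) := by
        simp only [pd]
        rw [hcomp.fderiv]
        simp [ContinuousLinearMap.comp_apply, ContinuousLinearMap.apply_apply]
      rw [h1] at h0
      exact h0
    have e1 := key i j
    have e2 := key j i
    rw [hsym (Pi.single i 1) (Pi.single j 1)] at e1
    rw [hb v hv i j, hb v hv j i]
    linarith
  -- main computation at a point
  intro u hu i
  -- ⟪gradρ, Nᵢ⟫ = ρ ⟪x, Nᵢ⟫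
  have hgradNi : ⟪gradρ u, pd N u i⟫ = ρ u * ⟪x u, pd N u i⟫ := by
    have h0 : ⟪N u, pd N u i⟫ = 0 := hNiN u hu i
    rw [hN u hu, real_inner_smul_left, inner_sub_left, real_inner_smul_left] at h0
    have hT : ρ u * ⟪x u, pd N u i⟫ - ⟪gradρ u, pd N u i⟫ = 0 := by
      rcases mul_eq_zero.mp h0 with h | h
      · exact absurd (inv_eq_zero.mp h) (hWne u hu)
      · exact h
    linarith
  -- Σ_j a_j ρ_j = Q
  have hsumQ : ∑ j, (∑ k, (e u)⁻¹ j k * pd ρ u k) * pd ρ u j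
      = ∑ i', ∑ j, (e u)⁻¹ i' j * pd ρ u i' * pd ρ u j := by
    refine Finset.sum_congr rfl fun j _ => ?_
    rw [Finset.sum_mul]
    refine Finset.sum_congr rfl fun k _ => ?_
    ring
  -- Σ_j a_j ⟪x_j, Nᵢ⟫ = ⟪gradρ, Nᵢ⟫
  have hsumgrad : ∑ j, (∑ k, (e u)⁻¹ j k * pd ρ u k) * ⟪pd x u j, pd N u i⟫
      = ⟪gradρ u, pd N u i⟫ := by
    rw [show (⟪gradρ u, pd N u i⟫ : ℝ) = ⟪pd N u i, gradρ u⟫ from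
      real_inner_comm _ _, hgr u hu (pd N u i)]
    refine Finset.sum_congr rfl fun j _ => ?_
    rw [real_inner_comm (pd N u i) (pd x u j), Finset.sum_mul]
  -- the key identity for ⟪x, Nᵢ⟫
  have hKsum : ∑ j, (∑ k, (e u)⁻¹ j k * pd ρ u k) * ⟪pd r u j, pd N u i⟫
      = (W u ^ 2) * ⟪x u, pd N u i⟫ := by
    have hterm : ∀ j, (∑ k, (e u)⁻¹ j k * pd ρ u k) * ⟪pd r u j, pd N u i⟫
        = (∑ k, (e u)⁻¹ j k * pd ρ u k) * pd ρ u j * ⟪x u, pd N u i⟫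
          + ρ u * ((∑ k, (e u)⁻¹ j k * pd ρ u k) * ⟪pd x u j, pd N u i⟫) := by
      intro j
      rw [hpdr u hu j, inner_add_left, real_inner_smul_left, real_inner_smul_left]
      ring
    have step1 : ∑ j, (∑ k, (e u)⁻¹ j k * pd ρ u k) * ⟪pd r u j, pd N u i⟫
        = (∑ j, (∑ k, (e u)⁻¹ j k * pd ρ u k) * pd ρ u j) * ⟪x u, pd N u i⟫
          + ρ u * ∑ j, (∑ k, (e u)⁻¹ j k * pd ρ u k) * ⟪pd x u j, pd N u i⟫ := by
      calc ∑ j, (∑ k, (e u)⁻¹ j k * pd ρ u k) * ⟪pd r u j, pd N u i⟫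
          = ∑ j, ((∑ k, (e u)⁻¹ j k * pd ρ u k) * pd ρ u j * ⟪x u, pd N u i⟫
            + ρ u * ((∑ k, (e u)⁻¹ j k * pd ρ u k) * ⟪pd x u j, pd N u i⟫)) :=
            Finset.sum_congr rfl fun j _ => hterm j
        _ = _ := by
            rw [Finset.sum_add_distrib, ← Finset.sum_mul, ← Finset.mul_sum]
    rw [step1, hsumQ, hsumgrad, hgradNi, hWsq u hu]
    ring
  have hK : ⟪x u, pd N u i⟫
      = (∑ j, (∑ k, (e u)⁻¹ j k * pd ρ u k) * ⟪pd r u j, pd N u i⟫) / (W u ^ 2) := by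
    rw [hKsum, mul_div_cancel_left₀ _ (pow_ne_zero 2 (hWne u hu))]
  -- derivative of γ
  have hsd : DifferentiableAt ℝ (fun w => ⟪x w, N w⟫) u :=
    (hxd u hu).inner ℝ (hNd u hu)
  have hsd2 : DifferentiableAt ℝ (fun w => 2 * ⟪x w, N w⟫) u := hsd.const_mul 2
  have hγE : γ =ᶠ[nhds u] fun w => x w - (2 * ⟪x w, N w⟫) • N w :=
    Filter.eventuallyEq_of_mem (hω.mem_nhds hu) hγ
  have hbig : HasFDerivAt (fun w => x w - (2 * ⟪x w, N w⟫) • N w)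
      (fderiv ℝ x u - ((2 * ⟪x u, N u⟫) • fderiv ℝ N u
        + (fderiv ℝ (fun w => 2 * ⟪x w, N w⟫) u).smulRight (N u))) u :=
    (hxd u hu).hasFDerivAt.sub (hsd2.hasFDerivAt.smul (hNd u hu).hasFDerivAt)
  have hpdγ : pd γ u i = pd x u i - ((2 * ⟪x u, N u⟫) • pd N u i
      + (pd (fun w => 2 * ⟪x w, N w⟫) u i) • N u) := by
    rw [pd, hγE.fderiv_eq, hbig.fderiv]
    simp [pd, ContinuousLinearMap.sub_apply, ContinuousLinearMap.add_apply,
      ContinuousLinearMap.smul_apply, ContinuousLinearMap.smulRight_apply]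
  have hpds : pd (fun w => 2 * ⟪x w, N w⟫) u i
      = 2 * (⟪pd x u i, N u⟫ + ⟪x u, pd N u i⟫) := by
    rw [pd, fderiv_const_mul hsd (2 : ℝ)]
    simp only [ContinuousLinearMap.smul_apply, smul_eq_mul]
    rw [show fderiv ℝ (fun w => (⟪x w, N w⟫ : ℝ)) u (Pi.single i 1)
      = pd (fun w => (⟪x w, N w⟫ : ℝ)) u i from rfl,
      pd_inner (hxd u hu) (hNd u hu)]
  have hNiN' : ⟪pd N u i, N u⟫ = 0 := by
    rw [real_inner_comm (N u) (pd N u i)]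
    exact hNiN u hu i
  have hmain : ⟪pd γ u i, N u⟫ = -⟪pd x u i, N u⟫ - 2 * ⟪x u, pd N u i⟫ := by
    rw [hpdγ, inner_sub_left, inner_add_left, real_inner_smul_left,
      real_inner_smul_left, hpds, hNN u hu, hNiN']
    ring
  -- Σ_j a_j e_{ji} = ρ_i
  have hsum_e : ∑ j, (∑ k, (e u)⁻¹ j k * pd ρ u k) * e u j i = pd ρ u i := by
    calc ∑ j, (∑ k, (e u)⁻¹ j k * pd ρ u k) * e u j i
        = ∑ k, pd ρ u k * (∑ j, e u i j * (e u)⁻¹ j k) := by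
          simp only [Finset.sum_mul]
          rw [Finset.sum_comm]
          refine Finset.sum_congr rfl fun k _ => ?_
          rw [Finset.mul_sum]
          refine Finset.sum_congr rfl fun j _ => ?_
          rw [hesym u hu i j]
          ring
      _ = pd ρ u i := by
          simp only [hee u hu]
          simp
  -- replace ⟪r_j, N_i⟫ by -b u j i
  have hsb : ∑ j, (∑ k, (e u)⁻¹ j k * pd ρ u k) * ⟪pd r u j, pd N u i⟫
      = -∑ j, (∑ k, (e u)⁻¹ j k * pd ρ u k) * b u j i := by
    rw [← Finset.sum_neg_distrib]
    refine Finset.sum_congr rfl fun j _ => ?_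
    have h1 : (⟪pd r u j, pd N u i⟫ : ℝ) = -(b u i j) := by
      rw [hb u hu i j]; ring
    rw [h1, hbsymm u hu i j]
    ring
  -- transform the RHS
  have hRHS : -∑ j, ((∑ k, (e u)⁻¹ j k * pd ρ u k) / W u) * κ u j i
      = (∑ j, (∑ k, (e u)⁻¹ j k * pd ρ u k) * e u j i) / W u
        + (2 * ∑ j, (∑ k, (e u)⁻¹ j k * pd ρ u k) * b u j i) / W u ^ 2 := by
    rw [← Finset.sum_neg_distrib, Finset.sum_div, Finset.mul_sum, Finset.sum_div,
      ← Finset.sum_add_distrib]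
    refine Finset.sum_congr rfl fun j _ => ?_
    rw [hκ u hu j i]
    ring
  rw [hmain, hxiN u hu i, hK, hsb, hRHS, hsum_e]
  ring
end
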